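/- Let (p, n, ψ, u) be a global strong solution of the PNP–NS system with periodic boundary conditions. Then for all 0 ≤ t₀ ≤ t, ‖p(t)‖_{L^∞(Ω)} ≤ ‖p(t₀)‖_{L^∞(Ω)} · exp( ∫_{t₀}^{t} ‖Δψ(s)‖_{L^∞(Ω)} ds ). -/

import Mathlib

open MeasureTheory Real Set

noncomputable section

abbrev Vec2 := ℝ × ℝ

/-- The spatial domain `Ω = (0,2π)²`. -/
def Om : Set Vec2 := Set.Ioo (0:ℝ) (2*π) ×ˢ Set.Ioo (0:ℝ) (2*π)

/-- Partial derivative in the first space variable. -/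
def pdx (f : Vec2 → ℝ) : Vec2 → ℝ := fun z => fderiv ℝ f z (1, 0)

/-- Partial derivative in the second space variable. -/
def pdy (f : Vec2 → ℝ) : Vec2 → ℝ := fun z => fderiv ℝ f z (0, 1)

/-- Spatial gradient. -/
def grad (f : Vec2 → ℝ) (z : Vec2) : Vec2 := (pdx f z, pdy f z)

/-- Euclidean dot product on ℝ². -/
def dotp (a b : Vec2) : ℝ := a.1 * b.1 + a.2 * b.2

/-- Divergence of a vector field. -/
def div2 (v : Vec2 → Vec2) (z : Vec2) : ℝ :=
  pdx (fun w => (v w).1) z + pdy (fun w => (v w).2) z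

/-- Laplacian. -/
def lap (f : Vec2 → ℝ) (z : Vec2) : ℝ := div2 (fun w => grad f w) z

/-- `|∇f|²`. -/
def gradNormSq (f : Vec2 → ℝ) (z : Vec2) : ℝ := (pdx f z)^2 + (pdy f z)^2

/-- `|∇v|²` for a vector field. -/
def vGradNormSq (v : Vec2 → Vec2) (z : Vec2) : ℝ :=
  gradNormSq (fun w => (v w).1) z + gradNormSq (fun w => (v w).2) z

/-- Componentwise Laplacian of a vector field. -/
def lapV (v : Vec2 → Vec2) (z : Vec2) : Vec2 :=
  (lap (fun w => (v w).1) z, lap (fun w => (v w).2) z)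

/-- Convective derivative `(u·∇)v`. -/
def convV (u v : Vec2 → Vec2) (z : Vec2) : Vec2 :=
  (dotp (u z) (grad (fun w => (v w).1) z), dotp (u z) (grad (fun w => (v w).2) z))

/-- `2π`-periodicity in both space variables. -/
def Periodic2 (f : Vec2 → ℝ) : Prop :=
  (∀ x y : ℝ, f (x + 2*π, y) = f (x, y)) ∧ (∀ x y : ℝ, f (x, y + 2*π) = f (x, y))

def Periodic2V (v : Vec2 → Vec2) : Prop :=
  Periodic2 (fun z => (v z).1) ∧ Periodic2 (fun z => (v z).2)

/-- Time derivative. -/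
def tderiv (p : ℝ → Vec2 → ℝ) (t : ℝ) (z : Vec2) : ℝ := deriv (fun s => p s z) t

def tderivV (u : ℝ → Vec2 → Vec2) (t : ℝ) (z : Vec2) : Vec2 :=
  (tderiv (fun s w => (u s w).1) t z, tderiv (fun s w => (u s w).2) t z)

/-! ### Discrete (spectral) objects -/

/-- The Fourier index box `[-N/2, N/2-1]²`. -/
def trigIdx (N : ℕ) : Finset (ℤ × ℤ) :=
  Finset.Icc (-(N:ℤ)/2) ((N:ℤ)/2 - 1) ×ˢ Finset.Icc (-(N:ℤ)/2) ((N:ℤ)/2 - 1)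

/-- Membership in the space `X_N` of real valued trigonometric polynomials
`span{e^{i(jx+ky)} : -N/2 ≤ j,k ≤ N/2-1}`. -/
def InXN (N : ℕ) (f : Vec2 → ℝ) : Prop :=
  ∃ c : ℤ × ℤ → ℂ, ∀ z : Vec2,
    (f z : ℂ) = ∑ jk ∈ trigIdx N,
      c jk * Complex.exp (Complex.I * ((jk.1 : ℂ) * (z.1 : ℂ) + (jk.2 : ℂ) * (z.2 : ℂ)))

def InXN2 (N : ℕ) (v : Vec2 → Vec2) : Prop :=
  InXN N (fun z => (v z).1) ∧ InXN N (fun z => (v z).2)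

/-- The Fourier collocation points `Σ_N`. -/
def colloc (N : ℕ) : Set Vec2 :=
  {z | ∃ i j : ℕ, i < N ∧ j < N ∧ z = (2*π*i/N, 2*π*j/N)}

/-- `L²(Ω)` inner product. -/
def ip (f g : Vec2 → ℝ) : ℝ := ∫ z in Om, f z * g z

def ipV (u v : Vec2 → Vec2) : ℝ := ∫ z in Om, dotp (u z) (v z)

/-- `L²(Ω)` norm. -/
def nrm (f : Vec2 → ℝ) : ℝ := Real.sqrt (ip f f)

def nrmV (u : Vec2 → Vec2) : ℝ := Real.sqrt (ipV u u)

def gradNrmSqInt (f : Vec2 → ℝ) : ℝ := ∫ z in Om, gradNormSq f z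

def vGradNrmSqInt (v : Vec2 → Vec2) : ℝ := ∫ z in Om, vGradNormSq v z

/-- `H¹(Ω)` norm. -/
def h1nrm (f : Vec2 → ℝ) : ℝ := Real.sqrt (ip f f + gradNrmSqInt f)

def h1nrmV (v : Vec2 → Vec2) : ℝ := Real.sqrt (ipV v v + vGradNrmSqInt v)

/-- The `L²`-orthogonal projection `Π_N` onto `X_N` (defined via choice). -/
def projN (N : ℕ) (f : Vec2 → ℝ) : Vec2 → ℝ :=
  open Classical in
  if h : ∃ g, InXN N g ∧ ∀ v, InXN N v → (∫ z in Om, (f z - g z) * v z) = 0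
  then h.choose else fun _ => 0

def projN2 (N : ℕ) (v : Vec2 → Vec2) : Vec2 → Vec2 :=
  fun z => (projN N (fun w => (v w).1) z, projN N (fun w => (v w).2) z)

/-! ### The decoupled scheme -/

/-- Step 1 of the decoupled scheme (the PNP part). -/
def Step1 (N : ℕ) (dt : ℝ) (pm nm : Vec2 → ℝ) (um : Vec2 → Vec2)
    (p1 n1 ψ1 : Vec2 → ℝ) : Prop :=
  InXN N p1 ∧ InXN N n1 ∧ InXN N ψ1 ∧ (∫ z in Om, ψ1 z) = 0 ∧
  (∀ v, InXN N v →
    (∫ z in Om, ((p1 z - pm z)/dt) * v z)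
      - (∫ z in Om, dotp (pm z • um z) (grad v z))
      + (∫ z in Om, (pm z * (1 + 2*dt*pm z)) *
          dotp (grad (fun w => Real.log (p1 w) + ψ1 w) z) (grad v z)) = 0) ∧
  (∀ v, InXN N v →
    (∫ z in Om, ((n1 z - nm z)/dt) * v z)
      - (∫ z in Om, dotp (nm z • um z) (grad v z))
      + (∫ z in Om, (nm z * (1 + 2*dt*nm z)) *
          dotp (grad (fun w => Real.log (n1 w) - ψ1 w) z) (grad v z)) = 0) ∧
  (∀ v, InXN N v →
    (∫ z in Om, dotp (grad ψ1 z) (grad v z)) = ∫ z in Om, (p1 z - n1 z) * v z)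

/-- Step 2 of the decoupled scheme (velocity prediction). -/
def Step2 (N : ℕ) (dt : ℝ) (pm nm φm : Vec2 → ℝ) (um : Vec2 → Vec2)
    (p1 n1 ψ1 : Vec2 → ℝ) (ut : Vec2 → Vec2) : Prop :=
  InXN2 N ut ∧
  ∀ w, InXN2 N w →
    (∫ z in Om, dotp ((1/dt) • (ut z - um z)) (w z))
    + (∫ z in Om, dotp (convV um ut z) (w z))
    + (∫ z in Om, (dotp (grad (fun y => (ut y).1) z) (grad (fun y => (w y).1) z)
        + dotp (grad (fun y => (ut y).2) z) (grad (fun y => (w y).2) z)))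
    + (∫ z in Om, dotp (grad φm z) (w z))
    + (∫ z in Om, dotp (pm z • grad (fun y => Real.log (p1 y) + ψ1 y) z
        + nm z • grad (fun y => Real.log (n1 y) - ψ1 y) z) (w z)) = 0

/-- Step 3 of the decoupled scheme (pressure correction / projection). -/
def Step3 (N : ℕ) (dt : ℝ) (φm : Vec2 → ℝ) (ut : Vec2 → Vec2)
    (u1 : Vec2 → Vec2) (φ1 : Vec2 → ℝ) : Prop :=
  InXN2 N u1 ∧ InXN N φ1 ∧ (∫ z in Om, φ1 z) = 0 ∧
  (∀ w, InXN2 N w →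
    (∫ z in Om, dotp ((1/dt) • (u1 z - ut z)) (w z))
    + (∫ z in Om, dotp (grad (fun y => φ1 y - φm y) z) (w z)) = 0) ∧
  (∀ q, InXN N q → (∫ z in Om, dotp (u1 z) (grad q z)) = 0)

/-- Admissibility of the data for one step of the scheme. -/
def SchemeData (N : ℕ) (pm nm φm : Vec2 → ℝ) (um : Vec2 → Vec2) : Prop :=
  InXN N pm ∧ InXN N nm ∧ InXN N φm ∧ InXN2 N um ∧
  (∫ z in Om, (pm z - nm z)) = 0 ∧ (∀ z, div2 um z = 0)


/-- Iterated spatial partial derivatives `∂_x^i ∂_y^j`. -/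
def pdIter (i j : ℕ) (f : Vec2 → ℝ) : Vec2 → ℝ := pdx^[i] (pdy^[j] f)

/-- Squared `H^s(Ω)` (Sobolev) norm via iterated partial derivatives. -/
def hSobSq (s : ℕ) (f : Vec2 → ℝ) : ℝ :=
  ∑ i ∈ Finset.range (s+1), ∑ j ∈ Finset.range (s+1-i), ∫ z in Om, (pdIter i j f z)^2

def hSobSqV (s : ℕ) (v : Vec2 → Vec2) : ℝ :=
  hSobSq s (fun z => (v z).1) + hSobSq s (fun z => (v z).2)

/-- `L^r(Ω)` norm (for a real exponent `r`). -/
def lrNrm (r : ℝ) (f : Vec2 → ℝ) : ℝ := (∫ z in Om, |f z| ^ r) ^ (1/r)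

/-- A global (in time) strong solution of the PNP–NS system with periodic boundary
conditions and initial data `(p^in, n^in, u^in)`; `ψ` and the pressure are normalized to
have zero mean. -/
structure IsGlobalStrongSol (pin nin : Vec2 → ℝ) (uin : Vec2 → Vec2)
    (p n ψ Pr : ℝ → Vec2 → ℝ) (u : ℝ → Vec2 → Vec2) : Prop where
  cont_p : Continuous (fun qz : ℝ × Vec2 => p qz.1 qz.2)
  cont_n : Continuous (fun qz : ℝ × Vec2 => n qz.1 qz.2)
  cont_psi : Continuous (fun qz : ℝ × Vec2 => ψ qz.1 qz.2)
  cont_u : Continuous (fun qz : ℝ × Vec2 => u qz.1 qz.2)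
  init_p : ∀ z, p 0 z = pin z
  init_n : ∀ z, n 0 z = nin z
  init_u : ∀ z, u 0 z = uin z
  periodic : ∀ t, Periodic2 (p t) ∧ Periodic2 (n t) ∧ Periodic2 (ψ t) ∧ Periodic2 (Pr t)
      ∧ Periodic2V (u t)
  reg_space : ∀ t > (0:ℝ), ContDiff ℝ 2 (p t) ∧ ContDiff ℝ 2 (n t) ∧ ContDiff ℝ 2 (ψ t)
      ∧ ContDiff ℝ 1 (Pr t) ∧ ContDiff ℝ 2 (fun z => u t z)
  reg_time : ∀ t > (0:ℝ), ∀ z, DifferentiableAt ℝ (fun s => p s z) t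
      ∧ DifferentiableAt ℝ (fun s => n s z) t
      ∧ DifferentiableAt ℝ (fun s => (u s z).1) t
      ∧ DifferentiableAt ℝ (fun s => (u s z).2) t
  mean_psi : ∀ t, (∫ z in Om, ψ t z) = 0
  mean_Pr : ∀ t, (∫ z in Om, Pr t z) = 0
  eq_p : ∀ t > (0:ℝ), ∀ z,
    tderiv p t z + dotp (u t z) (grad (p t) z)
      = div2 (fun w => grad (p t) w + p t w • grad (ψ t) w) z
  eq_n : ∀ t > (0:ℝ), ∀ z,
    tderiv n t z + dotp (u t z) (grad (n t) z)
      = div2 (fun w => grad (n t) w - n t w • grad (ψ t) w) z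
  eq_psi : ∀ t > (0:ℝ), ∀ z, -(lap (ψ t) z) = p t z - n t z
  eq_u : ∀ t > (0:ℝ), ∀ z,
    tderivV u t z + convV (u t) (u t) z - lapV (u t) z + grad (Pr t) z
      = -((p t z - n t z) • grad (ψ t) z)
  eq_div : ∀ t > (0:ℝ), ∀ z, div2 (u t) z = 0

/-- The `L^∞(Ω)` norm of a function (supremum of `|f|` over `Ω`). -/
def supAbs (f : Vec2 → ℝ) : ℝ := sSup ((fun z => |f z|) '' Om)

namespace Aux

def K : Set Vec2 := Set.Icc (0:ℝ) (2*π) ×ˢ Set.Icc (0:ℝ) (2*π)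

lemma isCompact_K : IsCompact K := (isCompact_Icc).prod isCompact_Icc

lemma closure_Om : closure Om = K := by
  have h2 : (0:ℝ) < 2*π := by positivity
  rw [Om, closure_prod_eq, closure_Ioo h2.ne, K]

lemma Om_subset_K : Om ⊆ K := by
  rw [← closure_Om]; exact subset_closure

lemma Om_nonempty : Om.Nonempty := ⟨(π, π), by
  constructor <;> constructor <;> [skip; skip; skip; skip] <;> nlinarith [pi_pos]⟩

/-- reduce any point to K using periodicity -/
lemma exists_in_K (f : Vec2 → ℝ) (hper : Periodic2 f) (w : Vec2) :
    ∃ w' ∈ K, f w' = f w := by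
  have h2 : (0:ℝ) < 2*π := by positivity
  set a := 2*π with ha
  have hx : Function.Periodic (fun x => f (x, w.2)) a := fun x => hper.1 x w.2
  have hx' := hx.sub_int_mul_eq (x := w.1) ⌊w.1/a⌋
  set x' := w.1 - ⌊w.1/a⌋ * a with hx'def
  have hxmem : x' ∈ Set.Ico (0:ℝ) a := by
    rw [hx'def]
    exact ⟨Int.sub_floor_div_mul_nonneg w.1 h2, Int.sub_floor_div_mul_lt w.1 h2⟩
  have hy : Function.Periodic (fun y => f (x', y)) a := fun y => hper.2 x' y
  have hy' := hy.sub_int_mul_eq (x := w.2) ⌊w.2/a⌋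
  set y' := w.2 - ⌊w.2/a⌋ * a with hy'def
  have hymem : y' ∈ Set.Ico (0:ℝ) a := by
    rw [hy'def]
    exact ⟨Int.sub_floor_div_mul_nonneg w.2 h2, Int.sub_floor_div_mul_lt w.2 h2⟩
  refine ⟨(x', y'), ⟨⟨hxmem.1, hxmem.2.le⟩, ⟨hymem.1, hymem.2.le⟩⟩, ?_⟩
  calc f (x', y') = f (x', w.2) := hy'
    _ = f (w.1, w.2) := hx'
    _ = f w := by simp

lemma bddAbove_absImage (f : Vec2 → ℝ) (hf : Continuous f) :
    BddAbove ((fun z => |f z|) '' Om) :=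
  (isCompact_K.image hf.abs).bddAbove.mono (Set.image_mono Om_subset_K)

lemma le_supAbs_of_memK (f : Vec2 → ℝ) (hf : Continuous f) :
    ∀ w ∈ K, |f w| ≤ supAbs f := by
  have hOm : ∀ w ∈ Om, |f w| ≤ supAbs f := fun w hw =>
    le_csSup (bddAbove_absImage f hf) ⟨w, hw, rfl⟩
  have hcl : IsClosed {w : Vec2 | |f w| ≤ supAbs f} :=
    isClosed_le hf.abs continuous_const
  intro w hw
  rw [← closure_Om] at hw
  exact closure_minimal hOm hcl hw

lemma le_supAbs (f : Vec2 → ℝ) (hf : Continuous f) (hper : Periodic2 f) :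
    ∀ w, |f w| ≤ supAbs f := by
  intro w
  obtain ⟨w', hw', he⟩ := exists_in_K f hper w
  rw [← he]
  exact le_supAbs_of_memK f hf w' hw'

lemma supAbs_nonneg (f : Vec2 → ℝ) (hf : Continuous f) : 0 ≤ supAbs f := by
  obtain ⟨z, hz⟩ := Om_nonempty
  exact le_trans (abs_nonneg _) (le_csSup (bddAbove_absImage f hf) ⟨z, hz, rfl⟩)

lemma exists_max (f : Vec2 → ℝ) (hf : Continuous f) :
    ∃ z ∈ K, supAbs f ≤ |f z| := by
  obtain ⟨z, hzK, hz⟩ := isCompact_K.exists_isMaxOn ⟨(0,0), by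
      constructor <;> constructor <;> [skip;skip;skip;skip] <;> positivity⟩
    (hf.abs.continuousOn)
  refine ⟨z, hzK, ?_⟩
  apply csSup_le ((Om_nonempty).image _)
  rintro b ⟨w, hw, rfl⟩
  exact hz (Om_subset_K hw)

end Aux

namespace Aux

instance : CompactSpace K := isCompact_iff_compactSpace.mp isCompact_K

lemma supAbs_eq_supK (f : Vec2 → ℝ) (hf : Continuous f) :
    supAbs f = sSup ((fun z => |f z|) '' K) := by
  apply le_antisymm
  · exact csSup_le_csSup (isCompact_K.image hf.abs).bddAbove
      ((Om_nonempty).image _) (Set.image_mono Om_subset_K)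
  · have hKne : K.Nonempty := ⟨(0,0), by constructor <;> constructor <;> positivity⟩
    apply csSup_le (hKne.image _)
    rintro b ⟨w, hw, rfl⟩
    exact le_supAbs_of_memK f hf w hw

lemma supAbs_eq_norm (f : Vec2 → ℝ) (hf : Continuous f) (g : C(K, ℝ))
    (hg : ∀ x : K, g x = f x) : supAbs f = ‖g‖ := by
  rw [supAbs_eq_supK f hf, ContinuousMap.norm_eq_iSup_norm, sSup_image']
  congr 1
  ext x
  rw [hg x, Real.norm_eq_abs]

lemma continuous_supAbs (F : ℝ → Vec2 → ℝ)
    (hF : Continuous (fun q : ℝ × Vec2 => F q.1 q.2)) :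
    Continuous (fun t => supAbs (F t)) := by
  have hinc : Continuous (fun q : ℝ × K => (q.1, (q.2 : Vec2))) :=
    continuous_fst.prodMk (continuous_subtype_val.comp continuous_snd)
  let Fc : C(ℝ × K, ℝ) := ⟨fun q => F q.1 (q.2 : Vec2), hF.comp hinc⟩
  let G := ContinuousMap.curry Fc
  have heq : (fun t => supAbs (F t)) = fun t => ‖G t‖ := by
    funext t
    exact supAbs_eq_norm (F t) (hF.comp (Continuous.prodMk_right t)) (G t) (fun x => rfl)
  rw [heq]
  exact continuous_norm.comp G.continuous

end Aux

namespace Aux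

lemma slice_x {f : Vec2 → ℝ} {z : Vec2} (hf : DifferentiableAt ℝ f z) :
    HasDerivAt (fun x => f (x, z.2)) (pdx f z) z.1 := by
  have hφ : HasDerivAt (fun x : ℝ => ((x, z.2) : Vec2)) ((1:ℝ), (0:ℝ)) z.1 :=
    (hasDerivAt_id z.1).prodMk (hasDerivAt_const z.1 z.2)
  have := hf.hasFDerivAt.comp_hasDerivAt z.1 (by simpa using hφ)
  simpa [pdx, Function.comp_def] using this

lemma slice_y {f : Vec2 → ℝ} {z : Vec2} (hf : DifferentiableAt ℝ f z) :
    HasDerivAt (fun y => f (z.1, y)) (pdy f z) z.2 := by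
  have hφ : HasDerivAt (fun y : ℝ => ((z.1, y) : Vec2)) ((0:ℝ), (1:ℝ)) z.2 :=
    (hasDerivAt_const z.2 z.1).prodMk (hasDerivAt_id z.2)
  have := hf.hasFDerivAt.comp_hasDerivAt z.2 (by simpa using hφ)
  simpa [pdy, Function.comp_def] using this

/-- second derivative at a global max is nonpositive -/
lemma secderiv_nonpos {g g' : ℝ → ℝ} {x0 c : ℝ}
    (hg : ∀ x, HasDerivAt g (g' x) x) (hc : HasDerivAt g' c x0)
    (hmax : ∀ x, g x ≤ g x0) : c ≤ 0 := by
  by_contra hpos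
  push_neg at hpos
  have hg'0 : g' x0 = 0 :=
    IsLocalMax.hasDerivAt_eq_zero (Filter.Eventually.of_forall hmax) (hg x0)
  have hslope : Filter.Tendsto (slope g' x0) (nhdsWithin x0 {x0}ᶜ) (nhds c) :=
    hasDerivAt_iff_tendsto_slope.mp hc
  have hslope' : Filter.Tendsto (slope g' x0) (nhdsWithin x0 (Set.Ioi x0)) (nhds c) :=
    hslope.mono_left (nhdsWithin_mono _ (fun x hx => ne_of_gt hx))
  have hev : ∀ᶠ x in nhdsWithin x0 (Set.Ioi x0), 0 < slope g' x0 x :=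
    hslope'.eventually (eventually_gt_nhds hpos)
  obtain ⟨u, hu, hsub⟩ := mem_nhdsGT_iff_exists_Ioo_subset.mp hev
  set m := x0 + (u - x0)/2 with hm
  have hx0m : x0 < m := by simp only [hm]; simp only [Set.mem_Ioi] at hu; linarith
  have hmu : m < u := by simp only [hm]; simp only [Set.mem_Ioi] at hu; linarith
  have hpos' : ∀ x ∈ Set.Ioo x0 m, 0 < g' x := by
    intro x hx
    have hxm : x ∈ Set.Ioo x0 u := ⟨hx.1, hx.2.trans hmu⟩
    have hs : 0 < (x - x0)⁻¹ * g' x := by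
      simpa [slope, hg'0] using (hsub hxm : 0 < slope g' x0 x)
    have hxx0 : 0 < x - x0 := by linarith [hx.1]
    have h2 := mul_pos hxx0 hs
    rwa [mul_inv_cancel_left₀ (ne_of_gt hxx0)] at h2
  have hmono : StrictMonoOn g (Set.Icc x0 m) := by
    apply strictMonoOn_of_deriv_pos (convex_Icc _ _)
    · exact fun x _ => (hg x).differentiableAt.continuousAt.continuousWithinAt
    · intro x hx
      rw [interior_Icc] at hx
      rw [(hg x).deriv]
      exact hpos' x hx
  have := hmono (Set.left_mem_Icc.mpr hx0m.le) (Set.right_mem_Icc.mpr hx0m.le) hx0m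
  exact absurd (hmax m) (by linarith)

/-- first derivative at a global max is zero, slice version -/
lemma pdx_eq_zero_of_max {f : Vec2 → ℝ} {z : Vec2}
    (hf : DifferentiableAt ℝ f z) (hmax : ∀ w, f w ≤ f z) : pdx f z = 0 :=
  IsLocalMax.hasDerivAt_eq_zero
    (Filter.Eventually.of_forall (fun x => hmax (x, z.2))) (slice_x hf)

lemma pdy_eq_zero_of_max {f : Vec2 → ℝ} {z : Vec2}
    (hf : DifferentiableAt ℝ f z) (hmax : ∀ w, f w ≤ f z) : pdy f z = 0 :=
  IsLocalMax.hasDerivAt_eq_zero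
    (Filter.Eventually.of_forall (fun y => hmax (z.1, y))) (slice_y hf)

lemma contDiff_pdx {f : Vec2 → ℝ} (hf : ContDiff ℝ 2 f) : ContDiff ℝ 1 (pdx f) :=
  ContDiff.clm_apply (hf.fderiv_right (by norm_num)) contDiff_const

lemma contDiff_pdy {f : Vec2 → ℝ} (hf : ContDiff ℝ 2 f) : ContDiff ℝ 1 (pdy f) :=
  ContDiff.clm_apply (hf.fderiv_right (by norm_num)) contDiff_const

lemma pdxx_nonpos_of_max {f : Vec2 → ℝ} {z : Vec2}
    (hf : ContDiff ℝ 2 f) (hmax : ∀ w, f w ≤ f z) : pdx (pdx f) z ≤ 0 := by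
  have hdiff : Differentiable ℝ f := hf.differentiable (by norm_num)
  have hdx : Differentiable ℝ (pdx f) := (contDiff_pdx hf).differentiable one_ne_zero
  refine secderiv_nonpos (g := fun x => f (x, z.2)) (g' := fun x => pdx f (x, z.2))
    (fun x => slice_x (hdiff (x, z.2))) ?_ (fun x => hmax (x, z.2))
  exact slice_x (hdx z)

lemma pdyy_nonpos_of_max {f : Vec2 → ℝ} {z : Vec2}
    (hf : ContDiff ℝ 2 f) (hmax : ∀ w, f w ≤ f z) : pdy (pdy f) z ≤ 0 := by
  have hdiff : Differentiable ℝ f := hf.differentiable (by norm_num)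
  have hdy : Differentiable ℝ (pdy f) := (contDiff_pdy hf).differentiable one_ne_zero
  refine secderiv_nonpos (g := fun y => f (z.1, y)) (g' := fun y => pdy f (z.1, y))
    (fun y => slice_y (hdiff (z.1, y))) ?_ (fun y => hmax (z.1, y))
  exact slice_y (hdy z)

end Aux

namespace Aux

lemma lap_eq (f : Vec2 → ℝ) (z : Vec2) : lap f z = pdx (pdx f) z + pdy (pdy f) z := rfl

lemma pdx_add_mul {f g h : Vec2 → ℝ} {z : Vec2} (hf : DifferentiableAt ℝ f z)
    (hg : DifferentiableAt ℝ g z) (hh : DifferentiableAt ℝ h z) :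
    pdx (fun w => f w + g w * h w) z = pdx f z + (g z * pdx h z + h z * pdx g z) := by
  simp only [pdx]
  rw [fderiv_fun_add hf (hg.fun_mul hh), fderiv_fun_mul hg hh]
  simp [ContinuousLinearMap.add_apply, ContinuousLinearMap.smul_apply, smul_eq_mul]

lemma pdy_add_mul {f g h : Vec2 → ℝ} {z : Vec2} (hf : DifferentiableAt ℝ f z)
    (hg : DifferentiableAt ℝ g z) (hh : DifferentiableAt ℝ h z) :
    pdy (fun w => f w + g w * h w) z = pdy f z + (g z * pdy h z + h z * pdy g z) := by
  simp only [pdy]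
  rw [fderiv_fun_add hf (hg.fun_mul hh), fderiv_fun_mul hg hh]
  simp [ContinuousLinearMap.add_apply, ContinuousLinearMap.smul_apply, smul_eq_mul]

lemma div2_expand {p ψ : Vec2 → ℝ} {z : Vec2} (hp : ContDiff ℝ 2 p) (hψ : ContDiff ℝ 2 ψ)
    (hx : pdx p z = 0) (hy : pdy p z = 0) :
    div2 (fun w => grad p w + p w • grad ψ w) z = lap p z + p z * lap ψ z := by
  have e1 : (fun w => (grad p w + p w • grad ψ w).1) = fun w => pdx p w + p w * pdx ψ w := by
    funext w; simp [grad, Prod.smul_mk, smul_eq_mul]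
  have e2 : (fun w => (grad p w + p w • grad ψ w).2) = fun w => pdy p w + p w * pdy ψ w := by
    funext w; simp [grad, Prod.smul_mk, smul_eq_mul]
  have dp : DifferentiableAt ℝ p z := (hp.differentiable (by norm_num)) z
  have dpx : DifferentiableAt ℝ (pdx p) z := ((contDiff_pdx hp).differentiable one_ne_zero) z
  have dpy : DifferentiableAt ℝ (pdy p) z := ((contDiff_pdy hp).differentiable one_ne_zero) z
  have dψx : DifferentiableAt ℝ (pdx ψ) z := ((contDiff_pdx hψ).differentiable one_ne_zero) z
  have dψy : DifferentiableAt ℝ (pdy ψ) z := ((contDiff_pdy hψ).differentiable one_ne_zero) z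
  unfold div2
  rw [e1, e2, pdx_add_mul dpx dp dψx, pdy_add_mul dpy dp dψy, lap_eq, lap_eq]
  rw [hx, hy]
  ring

end Aux


namespace Aux

lemma deriv_nonneg_of_max_left {f : ℝ → ℝ} {a T f' : ℝ} (hT : a < T)
    (hd : HasDerivAt f f' T) (hmax : ∀ s, a ≤ s → s < T → f s ≤ f T) : 0 ≤ f' := by
  have hs : Filter.Tendsto (slope f T) (nhdsWithin T (Set.Iio T)) (nhds f') :=
    (hasDerivAt_iff_tendsto_slope.mp hd).mono_left
      (nhdsWithin_mono _ (fun x hx => ne_of_lt hx))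
  apply ge_of_tendsto hs
  filter_upwards [Ioo_mem_nhdsLT_of_mem (Set.mem_Ioc.mpr ⟨hT, le_rfl⟩)] with s hs'
  have h1 : f s ≤ f T := hmax s hs'.1.le hs'.2
  have h2 : s - T < 0 := by linarith [hs'.2]
  have : slope f T s = (f s - f T) / (s - T) := by simp [slope_def_field]
  rw [this]
  exact div_nonneg_of_nonpos (by linarith) h2.le

lemma pdx_const_mul {f : Vec2 → ℝ} {z : Vec2} (c : ℝ) (hf : DifferentiableAt ℝ f z) :
    pdx (fun w => c * f w) z = c * pdx f z := by
  simp only [pdx]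
  rw [fderiv_const_mul hf c]
  simp

lemma pdy_const_mul {f : Vec2 → ℝ} {z : Vec2} (c : ℝ) (hf : DifferentiableAt ℝ f z) :
    pdy (fun w => c * f w) z = c * pdy f z := by
  simp only [pdy]
  rw [fderiv_const_mul hf c]
  simp

end Aux

/-- `L^∞` growth estimate: for a global strong solution of the PNP–NS
system and all `0 ≤ t₀ ≤ t`,
`‖p(t)‖_{L^∞(Ω)} ≤ ‖p(t₀)‖_{L^∞(Ω)} · exp( ∫_{t₀}^{t} ‖Δψ(s)‖_{L^∞(Ω)} ds )`. -/
theorem Linfty_growth_estimate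
    (pin nin : Vec2 → ℝ) (uin : Vec2 → Vec2)
    (p n ψ Pr : ℝ → Vec2 → ℝ) (u : ℝ → Vec2 → Vec2)
    (hpin : ∀ z, 0 < pin z) (hnin : ∀ z, 0 < nin z)
    (hneutral : (∫ z in Om, (pin z - nin z)) = 0)
    (hsol : IsGlobalStrongSol pin nin uin p n ψ Pr u) :
    ∀ t₀ t : ℝ, 0 ≤ t₀ → t₀ ≤ t →
      supAbs (p t) ≤ supAbs (p t₀)
        * Real.exp (∫ s in Set.Icc t₀ t, supAbs (fun z => lap (ψ s) z)) := by
  intro t₀ t1 ht₀ ht01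
  -- basic continuity / periodicity facts
  have cont_ps : ∀ s, Continuous (p s) := fun s => hsol.cont_p.comp (Continuous.prodMk_right s)
  have cont_ns : ∀ s, Continuous (n s) := fun s => hsol.cont_n.comp (Continuous.prodMk_right s)
  have per_p : ∀ s, Periodic2 (p s) := fun s => (hsol.periodic s).1
  have per_np : ∀ s, Periodic2 (fun z => n s z - p s z) := by
    intro s
    constructor
    · intro x y
      simp only [(hsol.periodic s).2.1.1 x y, (per_p s).1 x y]
    · intro x y
      simp only [(hsol.periodic s).2.1.2 x y, (per_p s).2 x y]
  set M : ℝ → ℝ := fun s => supAbs (p s) with hM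
  set g : ℝ → ℝ := fun s => supAbs (fun z => n s z - p s z) with hg
  have hMcont : Continuous M := Aux.continuous_supAbs p hsol.cont_p
  have hgcont : Continuous g :=
    Aux.continuous_supAbs (fun s z => n s z - p s z) (hsol.cont_n.sub hsol.cont_p)
  have A1p : ∀ s w, |p s w| ≤ M s := fun s => Aux.le_supAbs (p s) (cont_ps s) (per_p s)
  have A1np : ∀ s w, |n s w - p s w| ≤ g s := fun s =>
    Aux.le_supAbs _ ((cont_ns s).sub (cont_ps s)) (per_np s)
  have hM0 : 0 ≤ M t₀ := Aux.supAbs_nonneg (p t₀) (cont_ps t₀)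
  -- key estimate with epsilon
  have key : ∀ ε > 0, M t1 ≤ (M t₀ + ε) *
      Real.exp ((∫ s in t₀..t1, g s) + ε * (t1 - t₀)) := by
    intro ε hε
    set G : ℝ → ℝ := fun x => ∫ s in t₀..x, (g s + ε) with hGdef
    set B : ℝ → ℝ := fun x => (M t₀ + ε) * Real.exp (G x) with hBdef
    have hgε : Continuous (fun s => g s + ε) := hgcont.add continuous_const
    have hG' : ∀ x, HasDerivAt G (g x + ε) x := fun x =>
      intervalIntegral.integral_hasDerivAt_right (hgε.intervalIntegrable _ _)
        (hgε.stronglyMeasurableAtFilter _ _) hgε.continuousAt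
    have hB' : ∀ x, HasDerivAt B ((g x + ε) * B x) x := by
      intro x
      have h1 := ((hG' x).exp).const_mul (M t₀ + ε)
      refine h1.congr_deriv ?_
      simp only [hBdef]
      ring
    have hBcont : Continuous B := by
      rw [continuous_iff_continuousAt]
      exact fun x => (hB' x).continuousAt
    have hBpos : ∀ x, 0 < B x := fun x => mul_pos (by linarith) (Real.exp_pos _)
    have hBt₀ : B t₀ = M t₀ + ε := by
      simp only [hBdef, hGdef, intervalIntegral.integral_same, Real.exp_zero, mul_one]
    have hMt₀B : M t₀ < B t₀ := by rw [hBt₀]; linarith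
    set S : Set ℝ := Set.Icc t₀ t1 ∩ {s | B s ≤ M s} with hS
    have hSempty : S = ∅ := by
      by_contra hne'
      have hne : S.Nonempty := Set.nonempty_iff_ne_empty.mpr hne'
      have hSclosed : IsClosed S := isClosed_Icc.inter (isClosed_le hBcont hMcont)
      have hbdd : BddBelow S := (bddBelow_Icc).mono Set.inter_subset_left
      set T := sInf S with hT
      have hTS : T ∈ S := hSclosed.csInf_mem hne hbdd
      have hTIcc : T ∈ Set.Icc t₀ t1 := hTS.1
      have hTBM : B T ≤ M T := hTS.2
      have hTne : T ≠ t₀ := by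
        intro h
        rw [h] at hTBM
        linarith
      have ht₀T : t₀ < T := lt_of_le_of_ne hTIcc.1 (Ne.symm hTne)
      have hTpos : 0 < T := lt_of_le_of_lt ht₀ ht₀T
      have hless : ∀ s, t₀ ≤ s → s < T → M s < B s := by
        intro s hs1 hs2
        by_contra hc
        push_neg at hc
        have hsS : s ∈ S := ⟨⟨hs1, le_trans hs2.le hTIcc.2⟩, hc⟩
        exact absurd (csInf_le hbdd hsS) (not_le.mpr hs2)
      have hMTBT : M T ≤ B T := by
        have h1 : Filter.Tendsto M (nhdsWithin T (Set.Iio T)) (nhds (M T)) :=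
          (hMcont.tendsto T).mono_left nhdsWithin_le_nhds
        have h2 : Filter.Tendsto B (nhdsWithin T (Set.Iio T)) (nhds (B T)) :=
          (hBcont.tendsto T).mono_left nhdsWithin_le_nhds
        refine le_of_tendsto_of_tendsto h1 h2 ?_
        filter_upwards [Ioo_mem_nhdsLT_of_mem (Set.mem_Ioc.mpr ⟨ht₀T, le_rfl⟩)] with s hs'
        exact (hless s hs'.1.le hs'.2).le
      have hEq : M T = B T := le_antisymm hMTBT hTBM
      -- maximizer of |p T| on K
      obtain ⟨zs, hzsK, hzsmax⟩ := Aux.exists_max (p T) (cont_ps T)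
      have hzsval : |p T zs| = M T := le_antisymm (A1p T zs) hzsmax
      set σ : ℝ := if 0 ≤ p T zs then 1 else -1 with hσ
      have hσval : σ * p T zs = |p T zs| := by
        by_cases h : 0 ≤ p T zs
        · simp [hσ, h, abs_of_nonneg h]
        · simp [hσ, h, abs_of_neg (not_le.mp h)]
      have hσone : σ = 1 ∨ σ = -1 := by
        by_cases h : 0 ≤ p T zs
        · left; simp [hσ, h]
        · right; simp [hσ, h]
      have hσabs : ∀ x : ℝ, σ * x ≤ |x| := by
        intro x
        rcases hσone with h | h <;> rw [h]
        · simpa using le_abs_self x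
        · rw [neg_one_mul]; exact neg_le_abs x
      have hσne : σ ≠ 0 := by rcases hσone with h | h <;> rw [h] <;> norm_num
      have hqmax : ∀ w, σ * p T w ≤ σ * p T zs := by
        intro w
        rw [hσval, hzsval]
        exact le_trans (hσabs _) (A1p T w)
      -- regularity at time T
      have hpT2 : ContDiff ℝ 2 (p T) := (hsol.reg_space T hTpos).1
      have hψT2 : ContDiff ℝ 2 (ψ T) := (hsol.reg_space T hTpos).2.2.1
      have hq2 : ContDiff ℝ 2 (fun z => σ * p T z) := contDiff_const.mul hpT2
      have hpdiff : ∀ z, DifferentiableAt ℝ (p T) z :=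
        fun z => (hpT2.differentiable (by norm_num)) z
      -- gradient of p T vanishes at zs
      have hqx0 : pdx (fun z => σ * p T z) zs = 0 :=
        Aux.pdx_eq_zero_of_max ((hq2.differentiable (by norm_num)) zs) hqmax
      have hqy0 : pdy (fun z => σ * p T z) zs = 0 :=
        Aux.pdy_eq_zero_of_max ((hq2.differentiable (by norm_num)) zs) hqmax
      have hpx0 : pdx (p T) zs = 0 := by
        have := Aux.pdx_const_mul σ (hpdiff zs)
        rw [this] at hqx0
        exact (mul_eq_zero.mp hqx0).resolve_left hσne
      have hpy0 : pdy (p T) zs = 0 := by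
        have := Aux.pdy_const_mul σ (hpdiff zs)
        rw [this] at hqy0
        exact (mul_eq_zero.mp hqy0).resolve_left hσne
      -- second derivative: σ * lap (p T) zs ≤ 0
      have hqeqx : pdx (fun z => σ * p T z) = fun z => σ * pdx (p T) z :=
        funext fun z => Aux.pdx_const_mul σ (hpdiff z)
      have hqeqy : pdy (fun z => σ * p T z) = fun z => σ * pdy (p T) z :=
        funext fun z => Aux.pdy_const_mul σ (hpdiff z)
      have hpdxdiff : ∀ z, DifferentiableAt ℝ (pdx (p T)) z :=
        fun z => ((Aux.contDiff_pdx hpT2).differentiable one_ne_zero) z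
      have hpdydiff : ∀ z, DifferentiableAt ℝ (pdy (p T)) z :=
        fun z => ((Aux.contDiff_pdy hpT2).differentiable one_ne_zero) z
      have hxx : pdx (pdx (fun z => σ * p T z)) zs ≤ 0 := Aux.pdxx_nonpos_of_max hq2 hqmax
      have hyy : pdy (pdy (fun z => σ * p T z)) zs ≤ 0 := Aux.pdyy_nonpos_of_max hq2 hqmax
      have hxx' : σ * pdx (pdx (p T)) zs ≤ 0 := by
        rw [hqeqx] at hxx
        rwa [Aux.pdx_const_mul σ (hpdxdiff zs)] at hxx
      have hyy' : σ * pdy (pdy (p T)) zs ≤ 0 := by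
        rw [hqeqy] at hyy
        rwa [Aux.pdy_const_mul σ (hpdydiff zs)] at hyy
      have hlapp : σ * lap (p T) zs ≤ 0 := by
        rw [Aux.lap_eq]
        nlinarith [hxx', hyy']
      -- the PDE at (T, zs)
      have hpde := hsol.eq_p T hTpos zs
      have hdot : dotp (u T zs) (grad (p T) zs) = 0 := by
        simp [dotp, grad, hpx0, hpy0]
      have hdiv : div2 (fun w => grad (p T) w + p T w • grad (ψ T) w) zs
          = lap (p T) zs + p T zs * lap (ψ T) zs :=
        Aux.div2_expand hpT2 hψT2 hpx0 hpy0
      have hlapψ : lap (ψ T) zs = n T zs - p T zs := by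
        have := hsol.eq_psi T hTpos zs
        linarith
      have htd : tderiv p T zs = lap (p T) zs + p T zs * (n T zs - p T zs) := by
        rw [hdot] at hpde
        rw [← hlapψ, ← hdiv]
        linarith [hpde]
      -- bound on σ * time derivative
      have hMTpos : 0 < M T := by rw [hEq]; exact hBpos T
      have hσtd : σ * tderiv p T zs ≤ M T * g T := by
        have h1 : σ * p T zs = M T := by rw [hσval, hzsval]
        have h2 : n T zs - p T zs ≤ g T := le_trans (le_abs_self _) (A1np T zs)
        calc σ * tderiv p T zs
            = σ * lap (p T) zs + (σ * p T zs) * (n T zs - p T zs) := by rw [htd]; ring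
          _ ≤ 0 + M T * (n T zs - p T zs) := by rw [h1]; exact add_le_add hlapp le_rfl
          _ ≤ M T * g T := by
              rw [zero_add]
              exact mul_le_mul_of_nonneg_left h2 hMTpos.le
      -- time derivative via endpoint maximum
      have hφd : HasDerivAt (fun s => σ * p s zs) (σ * tderiv p T zs) T := by
        have h1 : HasDerivAt (fun s => p s zs) (tderiv p T zs) T :=
          ((hsol.reg_time T hTpos zs).1).hasDerivAt
        exact h1.const_mul σ
      have hfd : HasDerivAt (fun s => σ * p s zs - B s)
          (σ * tderiv p T zs - (g T + ε) * B T) T := hφd.sub (hB' T)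
      have hend : 0 ≤ σ * tderiv p T zs - (g T + ε) * B T := by
        refine Aux.deriv_nonneg_of_max_left ht₀T hfd ?_
        intro s hs1 hs2
        have h1 : σ * p s zs ≤ M s := le_trans (hσabs _) (A1p s zs)
        have h2 : M s < B s := hless s hs1 hs2
        have h3 : σ * p T zs - B T = 0 := by
          rw [hσval, hzsval, hEq]; ring
        linarith
      -- contradiction
      have : M T * g T < (g T + ε) * B T := by
        rw [← hEq]
        nlinarith [hMTpos, hε]
      linarith
    -- conclude from S = ∅
    have ht1 : t1 ∉ S := by rw [hSempty]; exact Set.notMem_empty t1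
    have hMt1 : M t1 < B t1 := by
      by_contra hc
      push_neg at hc
      exact ht1 ⟨Set.right_mem_Icc.mpr ht01, hc⟩
    have hGt1 : G t1 = (∫ s in t₀..t1, g s) + ε * (t1 - t₀) := by
      simp only [hGdef]
      rw [intervalIntegral.integral_add (hgcont.intervalIntegrable _ _)
        (continuous_const.intervalIntegrable _ _), intervalIntegral.integral_const]
      simp [smul_eq_mul]
      ring
    rw [hBdef] at hMt1
    simp only at hMt1
    rw [hGt1] at hMt1
    exact hMt1.le
  -- identify the integral
  have hint : (∫ s in Set.Icc t₀ t1, supAbs (fun z => lap (ψ s) z)) = ∫ s in t₀..t1, g s := by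
    have hcongr : (∫ s in Set.Icc t₀ t1, supAbs (fun z => lap (ψ s) z))
        = ∫ s in Set.Icc t₀ t1, g s := by
      apply setIntegral_congr_ae measurableSet_Icc
      have hnull : {s : ℝ | ¬ (s ∈ Set.Icc t₀ t1 →
          supAbs (fun z => lap (ψ s) z) = g s)} ⊆ {0} := by
        intro s hs
        simp only [Set.mem_setOf_eq, Classical.not_imp] at hs
        obtain ⟨hsmem, hsne⟩ := hs
        by_contra h0
        apply hsne
        have hspos : 0 < s := lt_of_le_of_ne (le_trans ht₀ hsmem.1)
          (fun h => h0 (by simp [← h]))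
        have : (fun z => lap (ψ s) z) = fun z => n s z - p s z := by
          funext z
          have := hsol.eq_psi s hspos z
          linarith
        rw [hg]
        simp only
        rw [this]
      have := measure_mono_null hnull (Real.volume_singleton)
      rw [← MeasureTheory.ae_iff] at this
      exact this
    rw [hcongr, MeasureTheory.integral_Icc_eq_integral_Ioc,
      ← intervalIntegral.integral_of_le ht01]
  rw [hint]
  -- pass to the limit ε → 0⁺
  set I : ℝ := ∫ s in t₀..t1, g s with hI
  have hlim : Filter.Tendsto (fun ε : ℝ => (M t₀ + ε) * Real.exp (I + ε * (t1 - t₀)))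
      (nhdsWithin 0 (Set.Ioi 0)) (nhds ((M t₀ + 0) * Real.exp (I + 0 * (t1 - t₀)))) := by
    apply Filter.Tendsto.mono_left _ nhdsWithin_le_nhds
    exact ((continuous_const.add continuous_id).mul
      (Real.continuous_exp.comp (continuous_const.add
        (continuous_id.mul continuous_const)))).tendsto 0
  have hev : ∀ᶠ ε in nhdsWithin (0:ℝ) (Set.Ioi 0),
      M t1 ≤ (M t₀ + ε) * Real.exp (I + ε * (t1 - t₀)) := by
    filter_upwards [self_mem_nhdsWithin] with ε hε
    exact key ε hε
  have := ge_of_tendsto hlim hev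
  simpa using this

end
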